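/- Let M be a multi-context system, η a set of integrity constraints over M, and M'' the MCS obtained by adding the context C_0 with ACC_0(∅) = ∅, ACC_0({*}) = {{*}} and the bridge rules obtained from η by adding head (0:*). Then the equilibria of M'' are exactly the belief states (S_1, ..., S_n, {*}) such that (S_1, ..., S_n) is an equilibrium of M that fails to satisfy at least one integrity constraint in η; in particular, no belief state S' of M'' with app_0(S') = ∅ is an equilibrium of M''. -/
import Mathlib


/-- A ground bridge rule `(i : head) ← pos, not neg` of context `i`:
`pos` and `neg` are sets of pairs `(c, p)` meaning "belief `p` queried in context `c`". -/
structure BridgeRule (ι α : Type*) where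
  head : α
  pos : Set (ι × α)
  neg : Set (ι × α)

/-- A ground integrity constraint `← pos, not neg` over an MCS. -/
structure IntegrityConstraint (ι α : Type*) where
  pos : Set (ι × α)
  neg : Set (ι × α)

/-- A context of an MCS: a logic (given by its semantics `ACC`, mapping each
knowledge base to its set of acceptable belief sets), a knowledge base `kb`,
and a set of bridge rules `br`. -/
structure Context (ι α : Type*) where
  ACC : Set α → Set (Set α)
  kb : Set α
  br : Set (BridgeRule ι α)

/-- A multi-context system: a family of contexts indexed by `ι`. -/
abbrev MCS (ι α : Type*) := ι → Context ι α

/-- A belief state: one belief set per context. -/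
abbrev BeliefState (ι α : Type*) := ι → Set α

/-- A bridge rule is applicable in a belief state `S` if every positive body
literal holds in the corresponding belief set and no negative one does. -/
def BridgeRule.applicable {ι α : Type*} (r : BridgeRule ι α) (S : BeliefState ι α) : Prop :=
  (∀ q ∈ r.pos, q.2 ∈ S q.1) ∧ ∀ q ∈ r.neg, q.2 ∉ S q.1

/-- `app M i S`: the heads of the applicable bridge rules of context `i` w.r.t. `S`. -/
def app {ι α : Type*} (M : MCS ι α) (i : ι) (S : BeliefState ι α) : Set α :=
  {a | ∃ r ∈ (M i).br, r.applicable S ∧ r.head = a}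

/-- `S` is an equilibrium of `M` if `S i ∈ ACC_i (kb_i ∪ app_i S)` for every `i`. -/
def IsEquilibrium {ι α : Type*} (M : MCS ι α) (S : BeliefState ι α) : Prop :=
  ∀ i, S i ∈ (M i).ACC ((M i).kb ∪ app M i S)

/-- Logical consistency: existence of an equilibrium. -/
def LogConsistent {ι α : Type*} (M : MCS ι α) : Prop :=
  ∃ S, IsEquilibrium M S

/-- A belief state satisfies an integrity constraint unless all its positive body
literals hold and all its negative body literals fail. -/
def Satisfies {ι α : Type*} (S : BeliefState ι α) (c : IntegrityConstraint ι α) : Prop :=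
  ¬ ((∀ q ∈ c.pos, q.2 ∈ S q.1) ∧ ∀ q ∈ c.neg, q.2 ∉ S q.1)

/-- `M` weakly satisfies `η`: some equilibrium of `M` satisfies every IC in `η`. -/
def WeakSat {ι α : Type*} (M : MCS ι α) (η : Set (IntegrityConstraint ι α)) : Prop :=
  ∃ S, IsEquilibrium M S ∧ ∀ c ∈ η, Satisfies S c

/-- `M` strongly satisfies `η`: `M` is logically consistent and every
equilibrium of `M` satisfies every IC in `η`. -/
def StrongSat {ι α : Type*} (M : MCS ι α) (η : Set (IntegrityConstraint ι α)) : Prop :=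
  LogConsistent M ∧ ∀ S, IsEquilibrium M S → ∀ c ∈ η, Satisfies S c

/-- Relabel a body literal for the extended system (old contexts become `some i`). -/
def liftPair {ι α : Type*} (q : ι × α) : Option ι × α := (some q.1, q.2)

/-- Lift a bridge rule of `M` to the extended system. -/
def liftRule {ι α : Type*} (r : BridgeRule ι α) : BridgeRule (Option ι) α :=
  ⟨r.head, liftPair '' r.pos, liftPair '' r.neg⟩

/-- The bridge rule `(0 : *) ← body of c` obtained from an integrity constraint `c`. -/
def icRule {ι α : Type*} (star : α) (c : IntegrityConstraint ι α) : BridgeRule (Option ι) α :=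
  ⟨star, liftPair '' c.pos, liftPair '' c.neg⟩

/-- The MCS obtained from `M` by adding an extra context `C₀` (index `none`)
with empty knowledge base, semantics `ACC0`, and, for each integrity constraint
in `η`, a bridge rule with head `(0 : *)` and the same body. -/
def extMCS {ι α : Type*} (M : MCS ι α) (η : Set (IntegrityConstraint ι α))
    (star : α) (ACC0 : Set α → Set (Set α)) : MCS (Option ι) α :=
  fun o => match o with
  | some i => ⟨(M i).ACC, (M i).kb, liftRule '' (M i).br⟩
  | none => ⟨ACC0, ∅, icRule star '' η⟩

lemma liftRule_applicable {ι α : Type*} (r : BridgeRule ι α) (S' : BeliefState (Option ι) α) :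
    (liftRule r).applicable S' ↔ r.applicable (fun i => S' (some i)) := by
  unfold BridgeRule.applicable liftRule
  simp only [liftPair, Set.mem_image, Prod.forall, Prod.exists, forall_exists_index, and_imp]
  aesop

lemma icRule_applicable {ι α : Type*} (star : α) (c : IntegrityConstraint ι α)
    (S' : BeliefState (Option ι) α) :
    (icRule star c).applicable S' ↔ ¬ Satisfies (fun i => S' (some i)) c := by
  unfold BridgeRule.applicable icRule Satisfies
  simp only [liftPair, Set.mem_image, Prod.forall, Prod.exists, forall_exists_index, and_imp,
    not_not]
  aesop

lemma app_some {ι α : Type*} (M : MCS ι α) (η : Set (IntegrityConstraint ι α))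
    (star : α) (ACC0 : Set α → Set (Set α)) (i : ι) (S' : BeliefState (Option ι) α) :
    app (extMCS M η star ACC0) (some i) S' = app M i (fun j => S' (some j)) := by
  ext a
  simp only [app, extMCS, Set.mem_setOf_eq]
  constructor
  · rintro ⟨r, ⟨r0, hr0, rfl⟩, happ, rfl⟩
    exact ⟨r0, hr0, (liftRule_applicable r0 S').1 happ, rfl⟩
  · rintro ⟨r0, hr0, happ, rfl⟩
    exact ⟨liftRule r0, ⟨r0, hr0, rfl⟩, (liftRule_applicable r0 S').2 happ, rfl⟩

lemma app_none_star {ι α : Type*} (M : MCS ι α) (η : Set (IntegrityConstraint ι α))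
    (star : α) (ACC0 : Set α → Set (Set α)) (S' : BeliefState (Option ι) α)
    (h : ∃ c ∈ η, ¬ Satisfies (fun i => S' (some i)) c) :
    app (extMCS M η star ACC0) none S' = {star} := by
  ext a
  simp only [app, extMCS, Set.mem_setOf_eq, Set.mem_singleton_iff]
  constructor
  · rintro ⟨r, ⟨c, hc, rfl⟩, happ, rfl⟩; rfl
  · rintro rfl
    obtain ⟨c, hc, hv⟩ := h
    exact ⟨icRule _ c, ⟨c, hc, rfl⟩, (icRule_applicable _ c S').2 hv, rfl⟩

lemma app_none_empty {ι α : Type*} (M : MCS ι α) (η : Set (IntegrityConstraint ι α))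
    (star : α) (ACC0 : Set α → Set (Set α)) (S' : BeliefState (Option ι) α)
    (h : ¬ ∃ c ∈ η, ¬ Satisfies (fun i => S' (some i)) c) :
    app (extMCS M η star ACC0) none S' = ∅ := by
  ext a
  simp only [app, extMCS, Set.mem_setOf_eq, Set.mem_empty_iff_false, iff_false]
  rintro ⟨r, ⟨c, hc, rfl⟩, happ, rfl⟩
  exact h ⟨c, hc, (icRule_applicable star c S').1 happ⟩

/-- The equilibria of `M''` (with `ACC₀ ∅ = ∅`, `ACC₀ {*} = {{*}}`)
are exactly the belief states `(S₁, ..., Sₙ, {*})` where `(S₁, ..., Sₙ)` is an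
equilibrium of `M` failing to satisfy at least one IC in `η`; in particular no
belief state `S'` with `app₀ S' = ∅` is an equilibrium of `M''`. -/
theorem equilibria_of_strong_extension
    {ι α : Type*} (M : MCS ι α) (η : Set (IntegrityConstraint ι α))
    (star : α) (ACC0 : Set α → Set (Set α))
    (hACC0_empty : ACC0 ∅ = ∅) (hACC0_star : ACC0 {star} = {{star}}) :
    (∀ S' : BeliefState (Option ι) α,
      IsEquilibrium (extMCS M η star ACC0) S' ↔
        (S' none = {star} ∧ IsEquilibrium M (fun i => S' (some i)) ∧
          ∃ c ∈ η, ¬ Satisfies (fun i => S' (some i)) c))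
    ∧ ∀ S' : BeliefState (Option ι) α,
        app (extMCS M η star ACC0) none S' = ∅ →
          ¬ IsEquilibrium (extMCS M η star ACC0) S' := by
  have main : ∀ S' : BeliefState (Option ι) α,
      IsEquilibrium (extMCS M η star ACC0) S' ↔
        (S' none = {star} ∧ IsEquilibrium M (fun i => S' (some i)) ∧
          ∃ c ∈ η, ¬ Satisfies (fun i => S' (some i)) c) := by
    intro S'
    constructor
    · intro h
      have h0 := h none
      by_cases hviol : ∃ c ∈ η, ¬ Satisfies (fun i => S' (some i)) c
      · simp only [extMCS, Set.empty_union, app_none_star M η star ACC0 S' hviol,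
          hACC0_star, Set.mem_singleton_iff] at h0
        refine ⟨h0, ?_, hviol⟩
        intro i
        have hi := h (some i)
        simpa [extMCS, app_some M η star ACC0 i S'] using hi
      · simp only [extMCS, Set.empty_union, app_none_empty M η star ACC0 S' hviol,
          hACC0_empty] at h0
        exact absurd h0 (Set.notMem_empty _)
    · rintro ⟨h0, heq, hviol⟩
      intro o
      match o with
      | none =>
        simp only [extMCS, Set.empty_union, app_none_star M η star ACC0 S' hviol,
          hACC0_star, h0]
        rfl
      | some i =>
        have hi := heq i
        simpa [extMCS, app_some M η star ACC0 i S'] using hi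
  refine ⟨main, fun S' happ h => ?_⟩
  have h0 := h none
  simp only [extMCS, Set.empty_union, happ, hACC0_empty] at h0
  exact h0
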